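/- For every path-complete graph G = (N, E) on a finite nonempty alphabet S, there exist a deterministic and complete graph O = (N_O, E_O) on S, with N_O a collection of nonempty subsets of N, and an assignment P ↦ B_P of a regular language B_P ⊆ S* to each node P ∈ N_O, such that the family {B_P}_{P∈N_O} is a covering family of languages and, for all P, Q ∈ N_O and all h ∈ S, (P, Q, h) ∈ E_O if and only if h·B_P ⊆ B_Q. -/

import Mathlib

open Filter Topology NNReal

def IsClassKInf (α : ℝ≥0 → ℝ≥0) : Prop :=
  Continuous α ∧ α 0 = 0 ∧ StrictMono α ∧ ∀ M : ℝ≥0, ∃ r, M ≤ α r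

def IsClassKL (β : ℝ≥0 → ℝ≥0 → ℝ≥0) : Prop :=
  Continuous (fun p : ℝ≥0 × ℝ≥0 => β p.1 p.2) ∧
  (∀ t, Continuous (fun r => β r t) ∧ β 0 t = 0 ∧ StrictMono (fun r => β r t)) ∧
  (∀ r, Antitone (β r) ∧ Tendsto (β r) atTop (𝓝 0))

def PathComplete {N S : Type*} (E : Set (N × N × S)) : Prop :=
  ∀ K : ℕ, 1 ≤ K → ∀ j : Fin K → S, ∃ a : Fin (K + 1) → N,
    ∀ k : Fin K, (a k.castSucc, a k.succ, j k) ∈ E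

def sol {n : ℕ} {S : Type*} (f : S → EuclideanSpace ℝ (Fin n) → EuclideanSpace ℝ (Fin n))
    (σ : ℕ → S) (x0 : EuclideanSpace ℝ (Fin n)) : ℕ → EuclideanSpace ℝ (Fin n)
  | 0 => x0
  | k + 1 => f (σ k) (sol f σ x0 k)

def UGAS {n : ℕ} {S : Type*}
    (f : S → EuclideanSpace ℝ (Fin n) → EuclideanSpace ℝ (Fin n)) : Prop :=
  ∃ β : ℝ≥0 → ℝ≥0 → ℝ≥0, IsClassKL β ∧
    ∀ (σ : ℕ → S) (x0 : EuclideanSpace ℝ (Fin n)) (k : ℕ),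
      ‖sol f σ x0 k‖₊ ≤ β ‖x0‖₊ (k : ℝ≥0)

def IsPCLF {n : ℕ} {S N : Type*} (E : Set (N × N × S))
    (f : S → EuclideanSpace ℝ (Fin n) → EuclideanSpace ℝ (Fin n))
    (V : N → EuclideanSpace ℝ (Fin n) → ℝ) : Prop :=
  PathComplete E ∧ (∀ s, Continuous (V s)) ∧
  ∃ (α₁ α₂ : ℝ≥0 → ℝ≥0) (γ : ℝ≥0), IsClassKInf α₁ ∧ IsClassKInf α₂ ∧ γ < 1 ∧
    (∀ s x, (α₁ ‖x‖₊ : ℝ) ≤ V s x ∧ V s x ≤ (α₂ ‖x‖₊ : ℝ)) ∧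
    (∀ a b i, (a, b, i) ∈ E → ∀ x, V b (f i x) ≤ (γ : ℝ) * V a x)

def IsCoveringFamily {S : Type*} (C : Finset (Set (List S))) : Prop :=
  (∀ B ∈ C, Language.IsRegular (B : Language S)) ∧
  (⋃ B ∈ C, B) = Set.univ ∧
  ∀ B ∈ C, ∀ h : S, ∃ C' ∈ C, (fun w => h :: w) '' B ⊆ C'

def IsMBLF {n : ℕ} {S : Type*} (C : Finset (Set (List S)))
    (f : S → EuclideanSpace ℝ (Fin n) → EuclideanSpace ℝ (Fin n))
    (W : {B // B ∈ C} → EuclideanSpace ℝ (Fin n) → ℝ) : Prop :=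
  (∀ B, Continuous (W B)) ∧
  ∃ (α₁ α₂ : ℝ≥0 → ℝ≥0) (γ : ℝ≥0), IsClassKInf α₁ ∧ IsClassKInf α₂ ∧ γ < 1 ∧
    (∀ B x, (α₁ ‖x‖₊ : ℝ) ≤ W B x ∧ W B x ≤ (α₂ ‖x‖₊ : ℝ)) ∧
    (∀ (B C' : {B // B ∈ C}) (h : S),
      (fun w => h :: w) '' (B : Set (List S)) ⊆ (C' : Set (List S)) →
      ∀ x, W C' (f h x) ≤ (γ : ℝ) * W B x)

def prefixClass {S : Type*} (i : List S) : Set (List S) := {w | w <+: i ∨ i <+: w}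

section Aux
variable {S : Type} [Fintype S] [Nonempty S] {N : Type} [Fintype N]
variable (E : Set (N × N × S))

noncomputable def obsStep (h : S) (P : Finset N) : Finset N :=
  @Finset.filter N (fun a => ∃ b ∈ P, (a, b, h) ∈ E) (fun _ => Classical.dec _) Finset.univ

noncomputable def obsT (w : List S) : Finset N :=
  w.foldr (obsStep E) Finset.univ

def pathFrom : N → List S → Prop
  | _, [] => True
  | a, h :: w => ∃ b, (a, b, h) ∈ E ∧ pathFrom b w

theorem pathFrom_mem_obsT : ∀ (w : List S) (a : N), pathFrom E a w → a ∈ obsT E w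
  | [], a, _ => Finset.mem_univ a
  | h :: w, a, ⟨b, hab, hb⟩ => by
      simp only [obsT, List.foldr, obsStep, Finset.mem_filter, Finset.mem_univ, true_and]
      exact ⟨b, pathFrom_mem_obsT w b hb, hab⟩

theorem finPath_pathFrom : ∀ (K : ℕ) (j : Fin K → S) (a : Fin (K + 1) → N),
    (∀ k : Fin K, (a k.castSucc, a k.succ, j k) ∈ E) → pathFrom E (a 0) (List.ofFn j)
  | 0, _, _, _ => trivial
  | K + 1, j, a, hp => by
      rw [List.ofFn_succ]
      refine ⟨a 1, ?_, ?_⟩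
      · have := hp 0; simpa using this
      · have := finPath_pathFrom K (fun k => j k.succ) (fun k => a k.succ)
          (fun k => by
            have := hp k.succ
            simpa only [Fin.succ_castSucc] using this)
        simpa using this

theorem obsT_nonempty (hpc : PathComplete E) : ∀ w : List S, (obsT E w).Nonempty := by
  intro w
  match w with
  | [] =>
      obtain ⟨a, -⟩ := hpc 1 le_rfl (fun _ => Classical.arbitrary S)
      exact ⟨a 0, Finset.mem_univ _⟩
  | h :: t =>
      set w := h :: t with hw
      have hK : 1 ≤ w.length := by simp [hw]
      obtain ⟨a, ha⟩ := hpc w.length hK w.get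
      have : pathFrom E (a 0) (List.ofFn w.get) := finPath_pathFrom E _ _ a ha
      rw [List.ofFn_get] at this
      exact ⟨a 0, pathFrom_mem_obsT E w (a 0) this⟩

theorem obsT_regular (P : Finset N) :
    Language.IsRegular (↑({w | obsT E w = P} : Set (List S)) : Language S) := by
  classical
  refine ⟨Finset N → Finset N, inferInstance, ⟨fun g h => g ∘ obsStep E h, id, {g | g Finset.univ = P}⟩, ?_⟩
  have key : ∀ (w : List S) (g : Finset N → Finset N) (s : Finset N),
      (w.foldl (fun g h => g ∘ obsStep E h) g) s = g (w.foldr (obsStep E) s) := by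
    intro w
    induction w with
    | nil => intro g s; rfl
    | cons h t ih => intro g s; simp only [List.foldl, List.foldr]; exact ih _ _
  ext w
  simp only [DFA.mem_accepts]
  show (w.foldl (fun g h => g ∘ obsStep E h) id) Finset.univ = P ↔ obsT E w = P
  rw [key]
  rfl

end Aux

open Classical in
/-- Lemma 3: the observer graph of a path-complete graph comes
with regular languages attached to its nodes forming a covering family, with
edges characterized by inclusion under prepending. -/
theorem observer_graph_covering {S : Type} [Fintype S] [Nonempty S]
    {N : Type} [Fintype N] (E : Set (N × N × S)) (hpc : PathComplete E) :
    ∃ (NO : Finset (Finset N)) (_ : ∀ P ∈ NO, P.Nonempty)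
      (EO : Set ({P // P ∈ NO} × {P // P ∈ NO} × S))
      (B : {P // P ∈ NO} → Set (List S)),
      (∀ (a b b' : {P // P ∈ NO}) (i : S),
        (a, b, i) ∈ EO → (a, b', i) ∈ EO → b = b') ∧
      (∀ (a : {P // P ∈ NO}) (i : S), ∃ b, (a, b, i) ∈ EO) ∧
      IsCoveringFamily (Finset.image B Finset.univ) ∧
      (∀ (P Q : {P // P ∈ NO}) (h : S),
        (P, Q, h) ∈ EO ↔ (fun w => h :: w) '' B P ⊆ B Q) := by
  classical
  -- observer nodes: reachable observer states
  set NO : Finset (Finset N) :=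
    Finset.univ.filter (fun P => ∃ w : List S, obsT E w = P) with hNO
  have hTmem : ∀ w : List S, obsT E w ∈ NO := fun w => by
    rw [hNO, Finset.mem_filter]
    exact ⟨Finset.mem_univ _, w, rfl⟩
  have hne : ∀ P ∈ NO, P.Nonempty := by
    intro P hP
    simp only [hNO, Finset.mem_filter, Finset.mem_univ, true_and] at hP
    obtain ⟨w, rfl⟩ := hP
    exact obsT_nonempty E hpc w
  have hwit : ∀ P : {P // P ∈ NO}, ∃ w : List S, obsT E w = (P : Finset N) := by
    intro P
    exact (Finset.mem_filter.mp P.2).2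
  -- the step stays in NO
  have hstep : ∀ (P : {P // P ∈ NO}) (h : S), obsStep E h (P : Finset N) ∈ NO := by
    intro P h
    obtain ⟨w, hw⟩ := hwit P
    have : obsStep E h (P : Finset N) = obsT E (h :: w) := by rw [← hw]; rfl
    rw [this]; exact hTmem _
  refine ⟨NO, hne,
    {phq | (phq.2.1 : Finset N) = obsStep E phq.2.2 (phq.1 : Finset N)},
    fun P => {w | obsT E w = (P : Finset N)}, ?_, ?_, ?_, ?_⟩
  · intro a b b' i hb hb'
    exact Subtype.ext (hb.trans hb'.symm)
  · intro a i
    exact ⟨⟨obsStep E i (a : Finset N), hstep a i⟩, rfl⟩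
  · refine ⟨?_, ?_, ?_⟩
    · intro Bl hBl
      simp only [Finset.mem_image, Finset.mem_univ, true_and] at hBl
      obtain ⟨P, rfl⟩ := hBl
      exact obsT_regular E (P : Finset N)
    · ext w
      simp only [Set.mem_iUnion, Set.mem_univ, iff_true]
      exact ⟨{w' | obsT E w' = obsT E w},
        Finset.mem_image_of_mem _ (Finset.mem_univ (⟨obsT E w, hTmem w⟩ : {P // P ∈ NO})), rfl⟩
    · intro Bl hBl h
      simp only [Finset.mem_image, Finset.mem_univ, true_and] at hBl
      obtain ⟨P, rfl⟩ := hBl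
      refine ⟨{w | obsT E w = obsStep E h (P : Finset N)},
        Finset.mem_image_of_mem _ (Finset.mem_univ (⟨obsStep E h (P : Finset N), hstep P h⟩ : {P // P ∈ NO})), ?_⟩
      rintro _ ⟨w, hw, rfl⟩
      simp only [Set.mem_setOf_eq] at hw ⊢
      show obsStep E h (obsT E w) = _
      rw [hw]
  · intro P Q h
    constructor
    · rintro hQ _ ⟨w, hw, rfl⟩
      simp only [Set.mem_setOf_eq] at hw ⊢
      show obsStep E h (obsT E w) = _
      rw [hw, ← hQ]
    · intro hsub
      obtain ⟨w, hw⟩ := hwit P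
      have : (h :: w) ∈ {w | obsT E w = (Q : Finset N)} := hsub ⟨w, hw, rfl⟩
      have h2 : obsStep E h (obsT E w) = (Q : Finset N) := this
      show (Q : Finset N) = _
      rw [← h2, hw]
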